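/- Let f : X → Y be a surjective continuous affine open map of compact convex subsets of Hausdorff locally convex spaces. Then the induced map cc(f) : cc(X) → cc(Y) on hyperspaces of nonempty compact convex subsets with the Vietoris topology is open. -/

import Mathlib

open Set Pointwise

theorem aux_convex_nbhd {E : Type*} [AddCommGroup E] [Module ℝ E] [TopologicalSpace E]
    [IsTopologicalAddGroup E] [ContinuousSMul ℝ E] [LocallyConvexSpace ℝ E]
    {A U : Set E} (hA : IsCompact A) (hAv : Convex ℝ A) (hU : IsOpen U) (hAU : A ⊆ U) :
    ∃ O : Set E, IsOpen O ∧ Convex ℝ O ∧ A ⊆ O ∧ closure O ⊆ U := by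
  obtain ⟨V, hV, hAVU⟩ := compact_open_separated_add_right hA hU hAU
  obtain ⟨W, hW, hWc, hWV⟩ := exists_mem_nhds_isClosed_subset hV
  obtain ⟨S, hS, hSv, hSW⟩ :=
    ((locallyConvexSpace_iff_exists_convex_subset_zero ℝ E).mp inferInstance) W hW
  refine ⟨A + interior S, isOpen_interior.add_left, hAv.add hSv.interior, ?_, ?_⟩
  · intro a ha
    have h0 : (0 : E) ∈ interior S := mem_interior_iff_mem_nhds.mpr hS
    simpa using Set.add_mem_add ha h0
  · have h1 : A + interior S ⊆ A + W :=
      Set.add_subset_add_left (interior_subset.trans hSW)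
    have h2 : IsClosed (A + W) := hWc.add_left_of_isCompact hA
    exact (closure_minimal h1 h2).trans ((Set.add_subset_add_left hWV).trans hAVU)

/-- Hyperspace of nonempty compact convex subsets of `E` contained in `X`. -/
abbrev CCIn (E : Type*) [AddCommGroup E] [Module ℝ E] [TopologicalSpace E]
    (X : Set E) : Type _ :=
  {A : Set E // A.Nonempty ∧ IsCompact A ∧ Convex ℝ A ∧ A ⊆ X}

/-- Vietoris topology on `CCIn E X`. -/
def vietorisCC (E : Type*) [AddCommGroup E] [Module ℝ E] [TopologicalSpace E]
    (X : Set E) : TopologicalSpace (CCIn E X) :=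
  TopologicalSpace.generateFrom
    ({S | ∃ U : Set E, IsOpen U ∧ S = {A : CCIn E X | (A : Set E) ⊆ U}} ∪
     {S | ∃ U : Set E, IsOpen U ∧ S = {A : CCIn E X | ((A : Set E) ∩ U).Nonempty}})

/-- If `f : X → Y` is a surjective continuous affine open map of
compact convex subsets of Hausdorff locally convex spaces, then the induced map
`cc(f) : cc(X) → cc(Y)` is open with respect to the Vietoris topologies. -/
theorem cc_map_isOpenMap
    (E F : Type*) [AddCommGroup E] [Module ℝ E] [TopologicalSpace E]
    [IsTopologicalAddGroup E] [ContinuousSMul ℝ E] [T2Space E] [LocallyConvexSpace ℝ E]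
    [AddCommGroup F] [Module ℝ F] [TopologicalSpace F]
    [IsTopologicalAddGroup F] [ContinuousSMul ℝ F] [T2Space F] [LocallyConvexSpace ℝ F]
    (X : Set E) (Y : Set F) (hX : IsCompact X) (hXv : Convex ℝ X)
    (hY : IsCompact Y) (hYv : Convex ℝ Y)
    (f : E → F) (hcont : ContinuousOn f X) (hmaps : Set.MapsTo f X Y)
    (haff : ∀ x ∈ X, ∀ y ∈ X, ∀ t : ℝ, t ∈ Set.Icc (0:ℝ) 1 →
      f (t • x + (1 - t) • y) = t • f x + (1 - t) • f y)
    (hsurj : f '' X = Y)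
    (hopen : ∀ U : Set E, IsOpen U → ∃ V : Set F, IsOpen V ∧ f '' (U ∩ X) = V ∩ Y) :
    ∃ g : CCIn E X → CCIn F Y,
      (∀ A : CCIn E X, (g A : Set F) = f '' (A : Set E)) ∧
      @IsOpenMap (CCIn E X) (CCIn F Y) (vietorisCC E X) (vietorisCC F Y) g := by
  classical
  letI tX : TopologicalSpace (CCIn E X) := vietorisCC E X
  letI tY : TopologicalSpace (CCIn F Y) := vietorisCC F Y
  -- the image of a nonempty compact convex subset of X is again such in Y
  have himg : ∀ A : Set E, A.Nonempty ∧ IsCompact A ∧ Convex ℝ A ∧ A ⊆ X →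
      (f '' A).Nonempty ∧ IsCompact (f '' A) ∧ Convex ℝ (f '' A) ∧ f '' A ⊆ Y := by
    rintro A ⟨hne, hcomp, hconv, hsub⟩
    refine ⟨hne.image f, hcomp.image_of_continuousOn (hcont.mono hsub), ?_, ?_⟩
    · rintro _ ⟨x, hx, rfl⟩ _ ⟨y, hy, rfl⟩ a b ha hb hab
      have hx' := hsub hx; have hy' := hsub hy
      have hf := haff x hx' y hy' a ⟨ha, by linarith⟩
      rw [show (1:ℝ) - a = b by linarith] at hf
      exact ⟨a • x + b • y, hconv hx hy ha hb hab, hf⟩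
    · rintro _ ⟨x, hx, rfl⟩; exact hmaps (hsub hx)
  set g : CCIn E X → CCIn F Y := fun A => ⟨f '' (A : Set E), himg A A.2⟩ with hg
  refine ⟨g, fun A => rfl, ?_⟩
  intro Wo hWo
  rw [isOpen_iff_forall_mem_open]
  rintro _ ⟨A, hAW, rfl⟩
  -- get a basic neighborhood ⋂₀ T of A inside Wo
  set sub : Set (Set (CCIn E X)) :=
    ({S | ∃ U : Set E, IsOpen U ∧ S = {A : CCIn E X | (A : Set E) ⊆ U}} ∪
     {S | ∃ U : Set E, IsOpen U ∧ S = {A : CCIn E X | ((A : Set E) ∩ U).Nonempty}}) with hsubdef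
  have hbasis := TopologicalSpace.isTopologicalBasis_of_subbasis
      (show tX = TopologicalSpace.generateFrom sub from rfl)
  obtain ⟨B0, ⟨T, ⟨hTfin, hTsub⟩, rfl⟩, hAT, hTW⟩ :=
    hbasis.exists_subset_of_mem_open hAW hWo
  -- split T into containment-type and hitting-type subbasic sets
  set T₁ : Set (Set (CCIn E X)) :=
    T ∩ {S | ∃ u : Set E, IsOpen u ∧ S = {A : CCIn E X | (A : Set E) ⊆ u}} with hT₁def
  set T₂ : Set (Set (CCIn E X)) := T \ T₁ with hT₂def
  have hchoice1 : ∀ S : Set (CCIn E X), ∃ u : Set E,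
      S ∈ T₁ → IsOpen u ∧ S = {A : CCIn E X | (A : Set E) ⊆ u} := by
    intro S
    by_cases h : S ∈ T₁
    · obtain ⟨u, hu⟩ := h.2; exact ⟨u, fun _ => hu⟩
    · exact ⟨∅, fun hS => absurd hS h⟩
  choose uc huc using hchoice1
  have hchoice2 : ∀ S : Set (CCIn E X), ∃ u : Set E,
      S ∈ T₂ → IsOpen u ∧ S = {A : CCIn E X | ((A : Set E) ∩ u).Nonempty} := by
    intro S
    by_cases h : S ∈ T₂
    · rcases hTsub h.1 with h1 | h2
      · exact absurd ⟨h.1, h1⟩ h.2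
      · obtain ⟨u, hu⟩ := h2; exact ⟨u, fun _ => hu⟩
    · exact ⟨∅, fun hS => absurd hS h⟩
  choose uh huh using hchoice2
  -- the open set U containing A coming from the containment constraints
  set U : Set E := ⋂ S ∈ T₁, uc S with hUdef
  have hT₁fin : T₁.Finite := hTfin.subset Set.inter_subset_left
  have hUopen : IsOpen U := hT₁fin.isOpen_biInter fun S hS => (huc S hS).1
  have hAU : (A : Set E) ⊆ U := by
    refine Set.subset_iInter₂ fun S hS => ?_
    have hA' := hAT S hS.1
    rwa [(huc S hS).2] at hA'
  -- convex open O with A ⊆ O and closure O ⊆ U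
  obtain ⟨O, hOopen, hOv, hAO, hclO⟩ :=
    aux_convex_nbhd A.2.2.1 A.2.2.2.1 hUopen hAU
  obtain ⟨VO, hVOopen, hVOeq⟩ := hopen O hOopen
  have hchoice3 : ∀ S : Set (CCIn E X), ∃ V : Set F,
      S ∈ T₂ → IsOpen V ∧ f '' ((uh S ∩ O) ∩ X) = V ∩ Y := by
    intro S
    by_cases h : S ∈ T₂
    · obtain ⟨V, hV⟩ := hopen (uh S ∩ O) ((huh S h).1.inter hOopen)
      exact ⟨V, fun _ => hV⟩
    · exact ⟨∅, fun hS => absurd hS h⟩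
  choose vh hvh using hchoice3
  -- the candidate open neighborhood of g A
  set N : Set (CCIn F Y) :=
    {D : CCIn F Y | (D : Set F) ⊆ VO} ∩
      ⋂ S ∈ T₂, {D : CCIn F Y | ((D : Set F) ∩ vh S).Nonempty} with hNdef
  have hT₂fin : T₂.Finite := hTfin.diff
  refine ⟨N, ?_, ?_, ?_⟩
  · -- N ⊆ g '' Wo
    rintro D ⟨hD1, hD2⟩
    obtain ⟨hDne, hDcpt, hDcvx, hDY⟩ := D.2
    set C : Set E := f ⁻¹' (D : Set F) ∩ (O ∩ X) with hCdef
    have hCX : C ⊆ X := fun x hx => hx.2.2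
    have hCO : C ⊆ O := fun x hx => hx.2.1
    have hfC : f '' C = (D : Set F) := by
      apply Set.Subset.antisymm
      · rintro _ ⟨x, hx, rfl⟩; exact hx.1
      · intro d hd
        have hd' : d ∈ VO ∩ Y := ⟨hD1 hd, hDY hd⟩
        rw [← hVOeq] at hd'
        obtain ⟨x, hxOX, rfl⟩ := hd'
        exact ⟨x, ⟨hd, hxOX⟩, rfl⟩
    set B : Set E := closure (convexHull ℝ C) with hBdef
    have hhull : convexHull ℝ C ⊆ O ∩ X :=
      convexHull_min (Set.subset_inter hCO hCX) (hOv.inter hXv)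
    have hBX : B ⊆ X :=
      closure_minimal (hhull.trans Set.inter_subset_right) hX.isClosed
    have hBU : B ⊆ U :=
      (closure_mono (hhull.trans Set.inter_subset_left)).trans hclO
    have hBcpt : IsCompact B := hX.of_isClosed_subset isClosed_closure hBX
    have hBconv : Convex ℝ B := (convex_convexHull ℝ C).closure
    have hCne : C.Nonempty := by
      have : (f '' C).Nonempty := hfC ▸ hDne
      exact Set.image_nonempty.mp this
    have hCB : C ⊆ B := (subset_convexHull ℝ C).trans subset_closure
    have hBne : B.Nonempty := hCne.mono hCB
    have hfB : f '' B = (D : Set F) := by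
      have hslice : Convex ℝ {x | x ∈ X ∧ f x ∈ (D : Set F)} := by
        rintro x ⟨hxX, hxD⟩ y ⟨hyX, hyD⟩ a b ha hb hab
        refine ⟨hXv hxX hyX ha hb hab, ?_⟩
        have hf := haff x hxX y hyX a ⟨ha, by linarith⟩
        rw [show (1:ℝ) - a = b by linarith] at hf
        rw [hf]
        exact hDcvx hxD hyD ha hb hab
      have h1 : convexHull ℝ C ⊆ {x | x ∈ X ∧ f x ∈ (D : Set F)} :=
        convexHull_min (fun x hx => ⟨hx.2.2, hx.1⟩) hslice
      have h2 : f '' (convexHull ℝ C) ⊆ (D : Set F) := by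
        rintro _ ⟨x, hx, rfl⟩; exact (h1 hx).2
      apply Set.Subset.antisymm
      · have h3 : f '' B ⊆ closure (f '' (convexHull ℝ C)) :=
          (hcont.mono hBX).image_closure
        refine h3.trans ?_
        rw [← hDcpt.isClosed.closure_eq]
        exact closure_mono h2
      · calc (D : Set F) = f '' C := hfC.symm
          _ ⊆ f '' B := Set.image_mono hCB
    set BB : CCIn E X := ⟨B, hBne, hBcpt, hBconv, hBX⟩ with hBBdef
    have hBBT : BB ∈ ⋂₀ T := by
      intro S hS
      by_cases hS1 : S ∈ T₁
      · rw [(huc S hS1).2]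
        exact hBU.trans (Set.biInter_subset_of_mem hS1)
      · have hS2 : S ∈ T₂ := ⟨hS, hS1⟩
        rw [(huh S hS2).2]
        have hd := hD2
        rw [Set.mem_iInter₂] at hd
        obtain ⟨d, hdD, hdv⟩ := hd S hS2
        have hd' : d ∈ vh S ∩ Y := ⟨hdv, hDY hdD⟩
        rw [← (hvh S hS2).2] at hd'
        obtain ⟨x, hx, rfl⟩ := hd'
        have hxC : x ∈ C := ⟨hdD, hx.1.2, hx.2⟩
        exact ⟨x, hCB hxC, hx.1.1⟩
    exact ⟨BB, hTW hBBT, Subtype.ext hfB⟩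
  · -- N is open
    apply IsOpen.inter
    · exact TopologicalSpace.isOpen_generateFrom_of_mem (Or.inl ⟨VO, hVOopen, rfl⟩)
    · exact hT₂fin.isOpen_biInter fun S hS =>
        TopologicalSpace.isOpen_generateFrom_of_mem (Or.inr ⟨vh S, (hvh S hS).1, rfl⟩)
  · -- g A ∈ N
    constructor
    · have : (A : Set E) ⊆ O ∩ X := Set.subset_inter hAO A.2.2.2.2
      intro d hd
      obtain ⟨x, hx, rfl⟩ := hd
      have : f x ∈ VO ∩ Y := hVOeq ▸ ⟨x, this hx, rfl⟩
      exact this.1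
    · rw [Set.mem_iInter₂]
      intro S hS
      have hA' := hAT S hS.1
      rw [(huh S hS).2] at hA'
      obtain ⟨a, haA, hau⟩ := hA'
      have ha' : a ∈ (uh S ∩ O) ∩ X := ⟨⟨hau, hAO haA⟩, A.2.2.2.2 haA⟩
      have : f a ∈ vh S ∩ Y := (hvh S hS).2 ▸ ⟨a, ha', rfl⟩
      exact ⟨f a, ⟨a, haA, rfl⟩, this.1⟩
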